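/- Let q ∈ ℂ with q ≠ 0, let α, β, κ ∈ ℂ, and let λ : ℤ → ℂ be a grid of one of the three forms λ_x = αqˣ + βq⁻ˣ + κ, or λ_x = αx² + βx + κ, or λ_x = (−1)ˣ(αx + β) + κ. Fix u₀,u₁,u₂,u₃,u₄ ∈ ℂ and define, for x ∈ ℤ with λ_{x+1} ≠ λ_{x−1}, A₁(x) = (u₂ + u₃λ_x + u₄λ_x² − u₀λ_{x−1} − u₁λ_{x−1}λ_x)/(λ_{x+1} − λ_{x−1}) and A₂(x) = −(u₂ + u₃λ_x + u₄λ_x² − u₀λ_{x+1} − u₁λ_{x+1}λ_x)/(λ_{x+1} − λ_{x−1}). Then for every polynomial p ∈ ℂ[z] of degree n there exists a polynomial q̂ ∈ ℂ[z] of degree at most n+1 such that A₁(x)p(λ_{x+1}) + A₂(x)p(λ_{x−1}) = q̂(λ_x) for every x ∈ ℤ with λ_{x+1} ≠ λ_{x−1}. -/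
import Mathlib
open Polynomial

noncomputable def Hpoly (e₁ e₂ : Polynomial ℂ) : ℕ → Polynomial ℂ
  | 0 => 1
  | 1 => e₁
  | (k+2) => e₁ * Hpoly e₁ e₂ (k+1) - e₂ * Hpoly e₁ e₂ k

lemma Hpoly_degree (e₁ e₂ : Polynomial ℂ) (h1 : e₁.degree ≤ 1) (h2 : e₂.degree ≤ 2) :
    ∀ k, (Hpoly e₁ e₂ k).degree ≤ k := by
  intro k
  induction k using Nat.strong_induction_on with
  | _ k ih =>
    match k with
    | 0 => simpa [Hpoly] using (degree_one_le : (1 : Polynomial ℂ).degree ≤ 0)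
    | 1 => simpa [Hpoly] using h1
    | (k+2) =>
      have ha := ih (k+1) (by omega)
      have hb := ih k (by omega)
      have h1' : (e₁ * Hpoly e₁ e₂ (k+1)).degree ≤ (k+2 : ℕ) := by
        refine le_trans (degree_mul_le _ _) ?_
        refine le_trans (add_le_add h1 ha) ?_
        norm_cast
        omega
      have h2' : (e₂ * Hpoly e₁ e₂ k).degree ≤ (k+2 : ℕ) := by
        refine le_trans (degree_mul_le _ _) ?_
        refine le_trans (add_le_add h2 hb) ?_
        norm_cast
        omega
      simpa [Hpoly] using le_trans (degree_sub_le _ _) (max_le h1' h2')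

lemma Hpoly_eval (e₁ e₂ : Polynomial ℂ) (a b t : ℂ) (h1 : e₁.eval t = a + b)
    (h2 : e₂.eval t = a * b) :
    ∀ k, (a - b) * (Hpoly e₁ e₂ k).eval t = a ^ (k+1) - b ^ (k+1) := by
  intro k
  induction k using Nat.strong_induction_on with
  | _ k ih =>
    match k with
    | 0 => simp [Hpoly]
    | 1 => simp only [Hpoly, h1]; ring
    | (k+2) =>
      have ha := ih (k+1) (by omega)
      have hb := ih k (by omega)
      simp only [Hpoly, eval_sub, eval_mul, h1, h2]
      linear_combination (a + b) * ha - a * b * hb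

noncomputable def Dmono (e₁ e₂ : Polynomial ℂ) : ℕ → Polynomial ℂ
  | 0 => 0
  | (k+1) => Hpoly e₁ e₂ k

noncomputable def Emono (e₁ e₂ : Polynomial ℂ) : ℕ → Polynomial ℂ
  | 0 => -1
  | 1 => 0
  | (k+2) => e₂ * Hpoly e₁ e₂ k

lemma Dmono_eval (e₁ e₂ : Polynomial ℂ) (a b t : ℂ) (h1 : e₁.eval t = a + b)
    (h2 : e₂.eval t = a * b) (k : ℕ) :
    (a - b) * (Dmono e₁ e₂ k).eval t = a ^ k - b ^ k := by
  match k with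
  | 0 => simp [Dmono]
  | (k+1) => simpa [Dmono] using Hpoly_eval e₁ e₂ a b t h1 h2 k

lemma Emono_eval (e₁ e₂ : Polynomial ℂ) (a b t : ℂ) (h1 : e₁.eval t = a + b)
    (h2 : e₂.eval t = a * b) (k : ℕ) :
    (a - b) * (Emono e₁ e₂ k).eval t = b * a ^ k - a * b ^ k := by
  match k with
  | 0 => simp only [Emono, eval_neg, eval_one]; ring
  | 1 => simp only [Emono, eval_zero]; ring
  | (k+2) =>
    have h := Hpoly_eval e₁ e₂ a b t h1 h2 k
    simp only [Emono, eval_mul, h2]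
    linear_combination a * b * h

lemma grids (q α β κ : ℂ) (hq : q ≠ 0) (lam : ℤ → ℂ)
    (hgrid :
      (∀ x : ℤ, lam x = α * q ^ x + β * q ^ (-x) + κ) ∨
      (∀ x : ℤ, lam x = α * (x : ℂ) ^ 2 + β * (x : ℂ) + κ) ∨
      (∀ x : ℤ, lam x = (-1 : ℂ) ^ x * (α * (x : ℂ) + β) + κ)) :
    ∃ e₁ e₂ : Polynomial ℂ, e₁.degree ≤ 1 ∧ e₂.degree ≤ 2 ∧
      ∀ x : ℤ, e₁.eval (lam x) = lam (x+1) + lam (x-1) ∧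
        e₂.eval (lam x) = lam (x+1) * lam (x-1) := by
  rcases hgrid with h | h | h
  · refine ⟨C (q + q⁻¹) * X + C (κ * (2 - (q + q⁻¹))),
      C 1 * X^2 + C (κ * (q + q⁻¹ - 2)) * X
        + C (2*κ^2 - κ^2*(q + q⁻¹) + α*β*(q^2 + (q⁻¹)^2 - 2)),
      degree_linear_le, degree_quadratic_le, ?_⟩
    intro x
    have e1 : q ^ (x+1) = q ^ x * q := by rw [zpow_add₀ hq, zpow_one]
    have e2 : q ^ (x-1) = q ^ x * q⁻¹ := by rw [zpow_sub₀ hq, zpow_one, div_eq_mul_inv]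
    have e3 : q ^ (-(x+1)) = q ^ (-x) * q⁻¹ := by
      rw [neg_add, zpow_add₀ hq, zpow_neg_one]
    have e4 : q ^ (-(x-1)) = q ^ (-x) * q := by
      rw [show -(x-1) = -x + 1 by ring, zpow_add₀ hq, zpow_one]
    have hqx : q ^ x ≠ 0 := zpow_ne_zero x hq
    rw [h x, h (x+1), h (x-1)]
    simp only [e1, e2, e3, e4, zpow_neg, eval_add, eval_mul, eval_pow, eval_C, eval_X]
    constructor <;> (field_simp; ring)
  · refine ⟨C 2 * X + C (2*α),
      C 1 * X^2 + C (-2*α) * X + C (α^2 + 4*α*κ - β^2),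
      degree_linear_le, degree_quadratic_le, ?_⟩
    intro x
    rw [h x, h (x+1), h (x-1)]
    simp only [eval_add, eval_mul, eval_pow, eval_C, eval_X]
    push_cast
    constructor <;> ring
  · refine ⟨C (-2) * X + C (4*κ),
      C 1 * X^2 + C (-4*κ) * X + C (4*κ^2 - α^2),
      degree_linear_le, degree_quadratic_le, ?_⟩
    intro x
    have hm : ((-1 : ℂ)) ≠ 0 := by norm_num
    have hx1 : (-1 : ℂ) ^ (x+1) = -((-1:ℂ) ^ x) := by
      rw [zpow_add₀ hm, zpow_one]; ring
    have hx2 : (-1 : ℂ) ^ (x-1) = -((-1:ℂ) ^ x) := by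
      rw [zpow_sub₀ hm, zpow_one]; field_simp
    have hε : (-1 : ℂ) ^ x * (-1:ℂ) ^ x = 1 := by
      rw [← zpow_add₀ hm, show x + x = 2 * x by ring, zpow_mul]
      norm_num
    rw [h x, h (x+1), h (x-1)]
    simp only [hx1, hx2, eval_add, eval_mul, eval_pow, eval_C, eval_X]
    push_cast
    constructor
    · ring
    · linear_combination α^2 * hε

/-- On the q-quadratic, quadratic and alternating-linear grids,
an S–Heun operator with coefficients determined by the five parameters
u₀,…,u₄ raises the degree of polynomials in the grid variable by at most one. -/
theorem stmt1 (q α β κ : ℂ) (hq : q ≠ 0) (lam : ℤ → ℂ)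
    (hgrid :
      (∀ x : ℤ, lam x = α * q ^ x + β * q ^ (-x) + κ) ∨
      (∀ x : ℤ, lam x = α * (x : ℂ) ^ 2 + β * (x : ℂ) + κ) ∨
      (∀ x : ℤ, lam x = (-1 : ℂ) ^ x * (α * (x : ℂ) + β) + κ))
    (u₀ u₁ u₂ u₃ u₄ : ℂ) (n : ℕ) (p : Polynomial ℂ) (hp : p.degree = n) :
    ∃ qhat : Polynomial ℂ, qhat.degree ≤ (n + 1 : ℕ) ∧
      ∀ x : ℤ, lam (x + 1) ≠ lam (x - 1) →
        ((u₂ + u₃ * lam x + u₄ * (lam x) ^ 2 - u₀ * lam (x - 1) - u₁ * lam (x - 1) * lam x)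
            / (lam (x + 1) - lam (x - 1))) * p.eval (lam (x + 1)) +
        (-((u₂ + u₃ * lam x + u₄ * (lam x) ^ 2 - u₀ * lam (x + 1) - u₁ * lam (x + 1) * lam x)
            / (lam (x + 1) - lam (x - 1)))) * p.eval (lam (x - 1)) = qhat.eval (lam x) := by
  obtain ⟨e₁, e₂, hd1, hd2, hev⟩ := grids q α β κ hq lam hgrid
  set Pq : Polynomial ℂ := C u₄ * X^2 + C u₃ * X + C u₂ with hPq
  set L : Polynomial ℂ := C u₁ * X + C u₀ with hL
  refine ⟨∑ k ∈ p.support, C (p.coeff k) * (Pq * Dmono e₁ e₂ k - L * Emono e₁ e₂ k), ?_, ?_⟩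
  · refine le_trans (degree_sum_le _ _) ?_
    refine Finset.sup_le fun k hk => ?_
    have hkn : k ≤ n := by
      have := Polynomial.le_natDegree_of_mem_supp k hk
      rwa [natDegree_eq_of_degree_eq_some hp] at this
    have hterm : (C (p.coeff k) * (Pq * Dmono e₁ e₂ k - L * Emono e₁ e₂ k)).degree
        ≤ (k + 1 : ℕ) := by
      refine le_trans (degree_mul_le _ _) ?_
      refine le_trans (add_le_add degree_C_le (degree_sub_le _ _)) ?_
      rw [zero_add]
      refine max_le ?_ ?_
      · refine le_trans (degree_mul_le _ _) ?_
        match k with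
        | 0 => simp [Dmono]
        | (k+1) =>
          have := Hpoly_degree e₁ e₂ hd1 hd2 k
          refine le_trans (add_le_add degree_quadratic_le (by simpa [Dmono] using this)) ?_
          norm_cast
          omega
      · refine le_trans (degree_mul_le _ _) ?_
        match k with
        | 0 =>
          refine le_trans (add_le_add degree_linear_le (by simp [Emono] : (Emono e₁ e₂ 0).degree ≤ 0)) ?_
          norm_cast
        | 1 => simp [Emono]
        | (k+2) =>
          have := Hpoly_degree e₁ e₂ hd1 hd2 k
          have h2' : (Emono e₁ e₂ (k+2)).degree ≤ (k+2 : ℕ) := by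
            simp only [Emono]
            refine le_trans (degree_mul_le _ _) ?_
            refine le_trans (add_le_add hd2 this) ?_
            norm_cast
            omega
          refine le_trans (add_le_add degree_linear_le h2') ?_
          norm_cast
          omega
    refine le_trans hterm ?_
    exact_mod_cast (by omega : k + 1 ≤ n + 1)
  · intro x hab
    set t := lam x
    set a := lam (x+1)
    set b := lam (x-1)
    obtain ⟨h1, h2⟩ := hev x
    have hab' : a - b ≠ 0 := sub_ne_zero.mpr hab
    have key : (a - b) * (∑ k ∈ p.support,
        C (p.coeff k) * (Pq * Dmono e₁ e₂ k - L * Emono e₁ e₂ k)).eval t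
        = (u₂ + u₃ * t + u₄ * t^2 - u₀ * b - u₁ * b * t) * p.eval a
          - (u₂ + u₃ * t + u₄ * t^2 - u₀ * a - u₁ * a * t) * p.eval b := by
      have ea : p.eval a = ∑ k ∈ p.support, p.coeff k * a ^ k := by
        rw [eval_eq_sum, Polynomial.sum_def]
      have eb : p.eval b = ∑ k ∈ p.support, p.coeff k * b ^ k := by
        rw [eval_eq_sum, Polynomial.sum_def]
      rw [eval_finset_sum, Finset.mul_sum, ea, eb, Finset.mul_sum, Finset.mul_sum,
        ← Finset.sum_sub_distrib]
      refine Finset.sum_congr rfl fun k hk => ?_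
      have hD := Dmono_eval e₁ e₂ a b t h1 h2 k
      have hE := Emono_eval e₁ e₂ a b t h1 h2 k
      simp only [hPq, hL, eval_mul, eval_sub, eval_add, eval_pow, eval_C, eval_X]
      linear_combination (p.coeff k) * (u₄ * t^2 + u₃ * t + u₂) * hD
        - (p.coeff k) * (u₁ * t + u₀) * hE
    field_simp
    linear_combination -key
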